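/- Let M(x) = x for all x ∈ [0,∞) and let 1 ≤ p < ∞. The set C_p(M, Δ_3^2) = { real sequences x = (x_k)_{k≥1} : there exists ρ > 0 with Σ_{i=1}^∞ ((1/i) Σ_{k=1}^{i} M(|Δ_3^2 x_k|/ρ))^p < ∞ } is neither solid nor monotone. Concretely, the sequence x with x_k = k belongs to C_p(M, Δ_3^2), the sequence y with y_k = k for k odd and y_k = 0 for k even satisfies |y_k| ≤ |x_k| for all k and is the canonical pre-image of a step space of x, yet y does not belong to C_p(M, Δ_3^2). -/

import Mathlib

/-!
Statement 11 (Paper: Theorem 3.2 with Example 3.1).  With `M = id` and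
`1 ≤ p < ∞`, the space `C_p(M, Δ_3^2)` is neither solid nor monotone;
the witnesses are `x_k = k` and `y` equal to `x` at odd indices and `0` at
even indices.  Sequences are indexed so that `x k` represents the paper's
`x_{k+1}` (so the paper's index `k` is odd iff `k + 1` is odd here).
-/

open scoped ENNReal

/-- The generalized difference operator. -/
def delta (m : ℕ) : ℕ → (ℕ → ℝ) → ℕ → ℝ
  | 0, x => x
  | n + 1, x => fun k => delta m n x k - delta m n x (k + m)

/-- The Cesàro average `(1/i) ∑_{k=1}^{i} M (|x_k| / ρ)`, where `i` here is `i+1`. -/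
noncomputable def cesTerm (M : ℝ → ℝ) (x : ℕ → ℝ) (ρ : ℝ) (i : ℕ) : ℝ :=
  (1 / (i + 1 : ℝ)) * ∑ k ∈ Finset.range (i + 1), M (|x k| / ρ)

/-- `∑_{i=1}^∞ ((1/i) ∑_{k=1}^{i} M(|x_k|/ρ))^p`, valued in `ℝ≥0∞`. -/
noncomputable def cesaroSum (M : ℝ → ℝ) (p : ℝ) (x : ℕ → ℝ) (ρ : ℝ) : ℝ≥0∞ :=
  ∑' i : ℕ, ENNReal.ofReal (cesTerm M x ρ i) ^ p

/-- The space `C_p(M, Δ_m^n)`. -/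
def CpMDelta (M : ℝ → ℝ) (p : ℝ) (m n : ℕ) : Set (ℕ → ℝ) :=
  {x | ∃ ρ > 0, cesaroSum M p (delta m n x) ρ < ⊤}

/-- A solid set of sequences. -/
def SolidSet (E : Set (ℕ → ℝ)) : Prop :=
  ∀ x ∈ E, ∀ y : ℕ → ℝ, (∀ k, |y k| ≤ |x k|) → y ∈ E

/-- A monotone set of sequences: contains the canonical pre-images of all
its step spaces. -/
def MonotoneSet (E : Set (ℕ → ℝ)) : Prop :=
  ∀ x ∈ E, ∀ J : Set ℕ, J.indicator x ∈ E

/-- The sequence `x_k = k` (0-indexed: `x k = k + 1`). -/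
noncomputable def xseq : ℕ → ℝ := fun k => (k + 1 : ℝ)

/-- The sequence equal to `x_k = k` at odd paper-indices and `0` at even ones:
the canonical pre-image of the step space of `xseq` given by the odd indices. -/
noncomputable def yseq : ℕ → ℝ := ({k : ℕ | Odd (k + 1)} : Set ℕ).indicator xseq

lemma delta32 (x : ℕ → ℝ) (k : ℕ) :
    delta 3 2 x k = x k - 2 * x (k + 3) + x (k + 6) := by
  show (x k - x (k + 3)) - (x (k + 3) - x (k + 3 + 3)) = _
  ring_nf

lemma delta32_xseq (k : ℕ) : delta 3 2 xseq k = 0 := by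
  rw [delta32]; simp [xseq]; ring

lemma yseq_eval (k : ℕ) : yseq k = if Even k then (k + 1 : ℝ) else 0 := by
  simp [yseq, Set.indicator, Nat.odd_add_one, xseq]

lemma abs_delta32_yseq (k : ℕ) : |delta 3 2 yseq k| = 2 * k + 8 := by
  rw [delta32, yseq_eval, yseq_eval, yseq_eval]
  rcases Nat.even_or_odd k with h | h
  · have h3 : ¬ Even (k + 3) := by simp [Nat.even_add_one, parity_simps, h]
    have h6 : Even (k + 6) := by simpa [parity_simps] using h
    rw [if_pos h, if_neg h3, if_pos h6]
    rw [abs_of_nonneg (by nlinarith [Nat.cast_nonneg (α := ℝ) k])]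
    push_cast
    ring
  · have h0 : ¬ Even k := Nat.not_even_iff_odd.mpr h
    have h3 : Even (k + 3) := by
      rcases h with ⟨m, rfl⟩; exact ⟨m + 2, by ring⟩
    have h6 : ¬ Even (k + 6) := by simpa [parity_simps] using h0
    rw [if_neg h0, if_pos h3, if_neg h6]
    push_cast
    rw [abs_of_nonpos (by nlinarith [Nat.cast_nonneg (α := ℝ) k])]
    ring

lemma yseq_not_mem (p : ℝ) (hp : 1 ≤ p) :
    yseq ∉ CpMDelta (fun t => t) p 3 2 := by
  rintro ⟨ρ, hρ, hfin⟩
  have hterm : ∀ i : ℕ,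
      ENNReal.ofReal (8 / ρ) ^ p ≤ ENNReal.ofReal (cesTerm (fun t => t) (delta 3 2 yseq) ρ i) ^ p := by
    intro i
    refine ENNReal.rpow_le_rpow (ENNReal.ofReal_le_ofReal ?_) (by linarith)
    unfold cesTerm
    have hsum : ∀ k ∈ Finset.range (i + 1), (8 / ρ : ℝ) ≤ |delta 3 2 yseq k| / ρ := by
      intro k _
      rw [abs_delta32_yseq]
      have h8 : (8:ℝ) ≤ 2 * k + 8 := by nlinarith [Nat.cast_nonneg (α := ℝ) k]
      exact div_le_div_of_nonneg_right h8 hρ.le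
    calc (8 / ρ : ℝ) = (1 / (i + 1 : ℝ)) * ∑ _k ∈ Finset.range (i + 1), (8 / ρ : ℝ) := by
          rw [Finset.sum_const, Finset.card_range, nsmul_eq_mul, Nat.cast_add, Nat.cast_one]
          field_simp
      _ ≤ _ := by
          apply mul_le_mul_of_nonneg_left (Finset.sum_le_sum hsum) (by positivity)
  have hc : ENNReal.ofReal (8 / ρ) ^ p ≠ 0 := by
    apply (ENNReal.rpow_pos ?_ (by simp)).ne'
    simp [ENNReal.ofReal_pos]
    positivity
  have : (⊤ : ℝ≥0∞) ≤ cesaroSum (fun t => t) p (delta 3 2 yseq) ρ := by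
    calc (⊤ : ℝ≥0∞) = ∑' _ : ℕ, ENNReal.ofReal (8 / ρ) ^ p :=
          (ENNReal.tsum_const_eq_top_of_ne_zero hc).symm
      _ ≤ _ := ENNReal.tsum_le_tsum hterm
  exact (lt_irrefl _ (this.trans_lt hfin)).elim

lemma xseq_mem (p : ℝ) (hp : 1 ≤ p) : xseq ∈ CpMDelta (fun t => t) p 3 2 := by
  refine ⟨1, one_pos, ?_⟩
  have : cesaroSum (fun t => t) p (delta 3 2 xseq) 1 = 0 := by
    unfold cesaroSum
    have : ∀ i : ℕ, ENNReal.ofReal (cesTerm (fun t => t) (delta 3 2 xseq) 1 i) ^ p = 0 := by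
      intro i
      have : cesTerm (fun t => t) (delta 3 2 xseq) 1 i = 0 := by
        unfold cesTerm
        simp [delta32_xseq]
      rw [this]
      simp [ENNReal.zero_rpow_of_pos (by linarith : (0:ℝ) < p)]
    simp [this]
  rw [this]; exact ENNReal.zero_lt_top

theorem CpDelta32_not_solid_not_monotone (p : ℝ) (hp : 1 ≤ p) :
    xseq ∈ CpMDelta (fun t => t) p 3 2 ∧
    (∀ k, |yseq k| ≤ |xseq k|) ∧
    yseq = ({k : ℕ | Odd (k + 1)} : Set ℕ).indicator xseq ∧
    yseq ∉ CpMDelta (fun t => t) p 3 2 ∧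
    ¬ SolidSet (CpMDelta (fun t => t) p 3 2) ∧
    ¬ MonotoneSet (CpMDelta (fun t => t) p 3 2) := by
  have habs : ∀ k, |yseq k| ≤ |xseq k| := by
    intro k
    rw [yseq_eval]
    split <;> simp [xseq]
  refine ⟨xseq_mem p hp, habs, rfl, yseq_not_mem p hp, ?_, ?_⟩
  · intro h
    exact yseq_not_mem p hp (h xseq (xseq_mem p hp) yseq habs)
  · intro h
    exact yseq_not_mem p hp (h xseq (xseq_mem p hp) {k : ℕ | Odd (k + 1)})
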